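/- Let H be a complex Hilbert space and K ⊆ H a closed real subspace. Then K ∩ iK = {0} if and only if K′ + iK′ is dense in H, where K′ is the symplectic complement of K. -/

import Mathlib

open scoped Pointwise

/-- The symplectic complement `K′ = {ψ ∈ H : Im⟪ψ, k⟫ = 0 for all k ∈ K}` of a real
subspace `K` of a complex Hilbert space (inner product conjugate-linear in the first
argument). -/
def symplCompl {H : Type*} [NormedAddCommGroup H] [InnerProductSpace ℂ H]
    (K : Set H) : Set H :=
  {ψ : H | ∀ k ∈ K, (inner ℂ ψ k : ℂ).im = 0}

/-- For a closed real subspace `K ⊆ H` of a complex Hilbert space,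
`K ∩ iK = {0}` if and only if `K′ + iK′` is dense in `H`. -/
theorem inter_trivial_iff_dense_sum_symplCompl
    {H : Type*} [NormedAddCommGroup H] [InnerProductSpace ℂ H] [CompleteSpace H]
    (K : Set H)
    (h0 : (0 : H) ∈ K)
    (hadd : ∀ x ∈ K, ∀ y ∈ K, x + y ∈ K)
    (hsmul : ∀ (r : ℝ), ∀ x ∈ K, r • x ∈ K)
    (hclosed : IsClosed K) :
    K ∩ (Complex.I • K) = {0} ↔
      Dense (symplCompl K + Complex.I • symplCompl K : Set H) := by
  letI : InnerProductSpace ℝ H := InnerProductSpace.complexToReal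
  -- multiplication by I as a real-linear equivalence
  let J : H ≃ₗ[ℝ] H :=
    (LinearEquiv.smulOfNeZero ℂ H Complex.I Complex.I_ne_zero).restrictScalars ℝ
  have hJ : ∀ x : H, J x = Complex.I • x := fun x => rfl
  have hJs : ∀ x : H, J.symm x = -(Complex.I • x) := by
    intro x
    rw [LinearEquiv.symm_apply_eq, hJ, smul_neg, smul_smul, Complex.I_mul_I, neg_smul,
      one_smul, neg_neg]
  have hIIs : ∀ x : H, Complex.I • J.symm x = x := by
    intro x
    rw [hJs, smul_neg, smul_smul, Complex.I_mul_I, neg_smul, one_smul, neg_neg]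
  have hre : ∀ x y : H, (inner ℝ x y : ℝ) = (inner ℂ x y : ℂ).re := fun _ _ => rfl
  -- invariance of the real inner product under multiplication by I
  have hinner2 : ∀ a b : H, (inner ℝ (Complex.I • a) (Complex.I • b) : ℝ) = (inner ℝ a b : ℝ) := by
    intro a b
    rw [hre, hre, inner_smul_left, inner_smul_right]
    simp [← mul_assoc, Complex.conj_I]
  -- K as a real submodule
  let L : Submodule ℝ H :=
    { carrier := K
      add_mem' := fun ha hb => hadd _ ha _ hb
      zero_mem' := h0
      smul_mem' := fun r x hx => hsmul r x hx }
  -- orthogonal complement commutes with J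
  have orthMap : ∀ p : Submodule ℝ H,
      (p.map (J : H →ₗ[ℝ] H))ᗮ = pᗮ.map (J : H →ₗ[ℝ] H) := by
    intro p
    ext x
    constructor
    · intro hx
      rw [Submodule.mem_map_equiv, Submodule.mem_orthogonal]
      intro y hy
      have h1 : (inner ℝ (Complex.I • y) x : ℝ) = 0 :=
        hx (Complex.I • y) (Submodule.mem_map.mpr ⟨y, hy, by simp [hJ]⟩)
      rw [← hIIs x, hinner2] at h1
      exact h1
    · intro hx
      rw [Submodule.mem_map_equiv] at hx
      rw [Submodule.mem_orthogonal]
      intro u hu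
      rcases Submodule.mem_map.mp hu with ⟨y, hy, rfl⟩
      have h1 : (inner ℝ y (J.symm x) : ℝ) = 0 := (Submodule.mem_orthogonal _ _).mp hx y hy
      have : ((J : H →ₗ[ℝ] H) y : H) = Complex.I • y := by simp [hJ]
      rw [this, ← hIIs x, hinner2]
      exact h1
  -- J ∘ J = -1 on submodules
  have mapmap : ∀ p : Submodule ℝ H,
      (p.map (J : H →ₗ[ℝ] H)).map (J : H →ₗ[ℝ] H) = p := by
    intro p
    ext x
    rw [Submodule.mem_map_equiv, Submodule.mem_map_equiv]
    have : J.symm (J.symm x) = -x := by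
      rw [hJs, hJs, smul_neg, neg_neg, smul_smul, Complex.I_mul_I, neg_smul, one_smul]
    rw [this, neg_mem_iff]
  -- the symplectic complement is J(Lᗮ)
  let M : Submodule ℝ H := Lᗮ.map (J : H →ₗ[ℝ] H)
  have key : ∀ x k : H, (inner ℝ k (J.symm x) : ℝ) = -(inner ℂ x k : ℂ).im := by
    intro x k
    rw [hre, hJs, inner_neg_right, inner_smul_right]
    simp only [Complex.neg_re, Complex.mul_re, Complex.I_re, Complex.I_im, zero_mul, one_mul,
      zero_sub, neg_neg, neg_inj]
    rw [← inner_conj_symm x k, Complex.conj_im, neg_neg]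
  have hsc : symplCompl K = (M : Set H) := by
    ext x
    rw [SetLike.mem_coe, Submodule.mem_map_equiv, Submodule.mem_orthogonal]
    constructor
    · intro h k hk
      rw [key x k, h k hk, neg_zero]
    · intro h k hk
      have hx := h k hk
      rw [key x k] at hx
      exact neg_eq_zero.mp hx
  -- I • (coe of a submodule) is coe of its image under J
  have hsmulset : ∀ p : Submodule ℝ H,
      Complex.I • (p : Set H) = (p.map (J : H →ₗ[ℝ] H) : Set H) := by
    intro p
    rw [Submodule.map_coe]
    ext x
    simp only [Set.mem_smul_set, Set.mem_image, LinearEquiv.coe_coe, hJ]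
  -- rewrite the dense set
  have hset : (symplCompl K + Complex.I • symplCompl K : Set H)
      = ((M ⊔ Lᗮ : Submodule ℝ H) : Set H) := by
    rw [hsc, hsmulset M, mapmap Lᗮ, Submodule.coe_sup]
  -- rewrite the intersection
  have hKI : K ∩ (Complex.I • K) = ((L ⊓ L.map (J : H →ₗ[ℝ] H) : Submodule ℝ H) : Set H) := by
    rw [Submodule.coe_inf, ← hsmulset L]
    rfl
  -- orthogonal computation
  have horth : (M ⊔ Lᗮ : Submodule ℝ H)ᗮ = L.map (J : H →ₗ[ℝ] H) ⊓ L := by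
    rw [← Submodule.inf_orthogonal, orthMap, Submodule.orthogonal_orthogonal_eq_closure,
      IsClosed.submodule_topologicalClosure_eq hclosed]
  have hbot : ∀ p : Submodule ℝ H, (p : Set H) = {0} ↔ p = ⊥ := by
    intro p
    constructor
    · intro h
      ext x
      rw [Submodule.mem_bot, ← Set.mem_singleton_iff, ← h, SetLike.mem_coe]
    · rintro rfl
      exact Submodule.bot_coe
  rw [hset, hKI, hbot, Submodule.dense_iff_topologicalClosure_eq_top,
    Submodule.topologicalClosure_eq_top_iff, horth, inf_comm]
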